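/- Theorem 1 (Consistency of the Discriminative Likelihood Estimator): Let (Ω, 𝒫) be a probability space and (X_i)_{i∈ℕ} i.i.d. ℝ^d-valued random vectors. Let g : ℝ^m × ℝ^d → ℝ^b be measurable (the Stein feature map (θ, x) ↦ T_θ f(x)), let θ* ∈ ℝ^m, and assume E[‖g(θ*, X_1)‖] < ∞ and E[g(θ*, X_1)] = 0 (this is the content of correct model specification together with Stein's identity). Let Λ_min, Λ'_min, Λ_max > 0. Suppose for each n there are random vectors δ̂_n : Ω → ℝ^b, θ̂_n : Ω → ℝ^m and random matrices H̄11(n) ∈ ℝ^{b×b}, H̄12(n) ∈ ℝ^{b×m}, H̄21(n) := H̄12(n)ᵀ, H̄22(n) ∈ ℝ^{m×m} such that almost surely: (i) (1/n)·Σ_{i=1}^n g(θ*, X_i) + H̄11(n)·δ̂_n + H̄12(n)·(θ̂_n − θ*) = 0 and H̄21(n)·δ̂_n + H̄22(n)·(θ̂_n − θ*) = 0 (the mean-value expansion of the saddle-point first-order conditions); and (ii) H̄11(n), H̄22(n) are symmetric with λ_min(−H̄11(n)) ≥ Λ'_min, λ_min(−H̄21(n)·H̄11(n)⁻¹·H̄12(n))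 ≥ Λ_min, ‖H̄21(n)·H̄11(n)⁻¹‖ ≤ Λ_max, ‖H̄11(n)⁻¹·H̄12(n)‖ ≤ Λ_max, and 2‖H̄22(n)‖ ≤ Λ_min. Then δ̂_n → 0 and θ̂_n → θ* in probability as n → ∞. -/

import Mathlib

open Matrix MeasureTheory ProbabilityTheory Filter

/-- The Euclidean norm of a vector in `ℝ^k` represented as `Fin k → ℝ`. -/
noncomputable def euclNorm {k : ℕ} (v : Fin k → ℝ) : ℝ := Real.sqrt (v ⬝ᵥ v)


namespace DLEaux

lemma dot_self_nonneg {k : ℕ} (v : Fin k → ℝ) : 0 ≤ v ⬝ᵥ v :=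
  Finset.sum_nonneg fun i _ => mul_self_nonneg _

lemma euclNorm_nonneg {k : ℕ} (v : Fin k → ℝ) : 0 ≤ euclNorm v := Real.sqrt_nonneg _

lemma euclNorm_sq {k : ℕ} (v : Fin k → ℝ) : euclNorm v * euclNorm v = v ⬝ᵥ v :=
  Real.mul_self_sqrt (dot_self_nonneg v)

lemma euclNorm_neg {k : ℕ} (v : Fin k → ℝ) : euclNorm (-v) = euclNorm v := by
  simp [euclNorm]

lemma euclNorm_zero {k : ℕ} : euclNorm (0 : Fin k → ℝ) = 0 := by simp [euclNorm]

lemma dot_le {k : ℕ} (v w : Fin k → ℝ) : v ⬝ᵥ w ≤ euclNorm v * euclNorm w := by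
  have h := Real.sum_mul_le_sqrt_mul_sqrt Finset.univ v w
  simpa [euclNorm, dotProduct, pow_two] using h

lemma eq_zero_of_dot_self_le {k : ℕ} {v : Fin k → ℝ} (h : v ⬝ᵥ v ≤ 0) : v = 0 := by
  have h0 : v ⬝ᵥ v = 0 := le_antisymm h (dot_self_nonneg v)
  funext i
  have := (Finset.sum_eq_zero_iff_of_nonneg (fun i _ => mul_self_nonneg (v i))).1 h0 i
    (Finset.mem_univ i)
  exact mul_self_eq_zero.1 this

lemma quad {a x s K : ℝ} (ha : 0 < a) (hK : 0 ≤ K) (hx : 0 ≤ x) (hs : 0 ≤ s)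
    (h : a * x ^ 2 ≤ x * s + K * s ^ 2) :
    x ≤ (1 / a + Real.sqrt (K / a)) * s := by
  by_contra hlt
  push_neg at hlt
  set r := Real.sqrt (K / a) with hr_def
  have hr : 0 ≤ r := Real.sqrt_nonneg _
  have hr2 : r ^ 2 = K / a := Real.sq_sqrt (by positivity)
  have hKa : K = a * r ^ 2 := by rw [hr2]; field_simp
  have hx0 : 0 < x := lt_of_le_of_lt (by positivity) hlt
  have hainv : a * (1 / a) = 1 := mul_one_div_cancel ha.ne'
  have h1 : a * x * ((1 / a + r) * s) < a * x * x :=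
    mul_lt_mul_of_pos_left hlt (mul_pos ha hx0)
  have h2 : a * x * ((1 / a + r) * s) = x * s + a * r * s * x := by
    field_simp
  have h3 : a * r * s * ((1 / a + r) * s) ≤ a * r * s * x :=
    mul_le_mul_of_nonneg_left hlt.le (by positivity)
  have h4 : K * s ^ 2 ≤ a * r * s * ((1 / a + r) * s) := by
    rw [hKa]
    nlinarith [mul_nonneg hr (sq_nonneg s), hainv]
  have hx2 : x ^ 2 = x * x := sq x
  nlinarith [h1, h2, h3, h4, h, hx2]

end DLEaux

namespace DLEaux

lemma key {b m : ℕ} {Λmin Λ'min Λmax : ℝ} (hΛmin : 0 < Λmin) (hΛ'min : 0 < Λ'min)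
    (hΛmax : 0 < Λmax)
    (S δ : Fin b → ℝ) (t : Fin m → ℝ)
    (A : Matrix (Fin b) (Fin b) ℝ) (B : Matrix (Fin b) (Fin m) ℝ)
    (C : Matrix (Fin m) (Fin m) ℝ)
    (foc1 : S + A.mulVec δ + B.mulVec t = 0)
    (foc2 : Bᵀ.mulVec δ + C.mulVec t = 0)
    (h5 : ∀ x : Fin b → ℝ, Λ'min * (x ⬝ᵥ x) ≤ x ⬝ᵥ (-A).mulVec x)
    (h6 : ∀ x : Fin m → ℝ, Λmin * (x ⬝ᵥ x) ≤ x ⬝ᵥ (-(Bᵀ * A⁻¹ * B)).mulVec x)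
    (h7 : ∀ x : Fin b → ℝ, euclNorm ((Bᵀ * A⁻¹).mulVec x) ≤ Λmax * euclNorm x)
    (h9 : ∀ x : Fin m → ℝ, 2 * euclNorm (C.mulVec x) ≤ Λmin * euclNorm x) :
    euclNorm t ≤ 2 * Λmax / Λmin * euclNorm S ∧
      euclNorm δ ≤ (1 / Λ'min + Real.sqrt ((2 * Λmax ^ 2 / Λmin) / Λ'min)) * euclNorm S := by
  -- A is invertible
  have hinj : Function.Injective A.mulVec := by
    intro x y hxy
    have h0 : A.mulVec (x - y) = 0 := by rw [Matrix.mulVec_sub, hxy, sub_self]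
    have h1 := h5 (x - y)
    rw [Matrix.neg_mulVec, h0, neg_zero, dotProduct_zero] at h1
    have h2 : (x - y) ⬝ᵥ (x - y) ≤ 0 := by
      by_contra hc
      push_neg at hc
      nlinarith
    exact sub_eq_zero.1 (eq_zero_of_dot_self_le h2)
  have hdet : IsUnit A.det := (Matrix.isUnit_iff_isUnit_det A).1
    (Matrix.mulVec_injective_iff_isUnit.1 hinj)
  have hinv : A⁻¹ * A = 1 := Matrix.nonsing_inv_mul A hdet
  -- rearranged FOCs
  have hAd : A.mulVec δ = -S - B.mulVec t := by
    have := foc1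
    linear_combination this
  have hBd : Bᵀ.mulVec δ = -(C.mulVec t) := by linear_combination foc2
  -- key identity
  have hkey : (-(Bᵀ * A⁻¹ * B)).mulVec t = (Bᵀ * A⁻¹).mulVec S - C.mulVec t := by
    have h1 : (Bᵀ * A⁻¹ * B).mulVec t = (Bᵀ * A⁻¹).mulVec (B.mulVec t) := by
      rw [Matrix.mulVec_mulVec]
    have h2 : (Bᵀ * A⁻¹).mulVec (A.mulVec δ) = Bᵀ.mulVec δ := by
      rw [Matrix.mulVec_mulVec, Matrix.mul_assoc, hinv, Matrix.mul_one]
    have hBt : B.mulVec t = -(A.mulVec δ) - S := by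
      rw [hAd]; abel
    rw [Matrix.neg_mulVec, h1, hBt, Matrix.mulVec_sub, Matrix.mulVec_neg, h2, hBd]
    abel
  set T := euclNorm t with hT_def
  set s := euclNorm S with hs_def
  set D := euclNorm δ with hD_def
  have hTnn : 0 ≤ T := euclNorm_nonneg t
  have hsnn : 0 ≤ s := euclNorm_nonneg S
  have hDnn : 0 ≤ D := euclNorm_nonneg δ
  -- bound on T
  have ht1 : Λmin * (T * T) ≤ t ⬝ᵥ ((Bᵀ * A⁻¹).mulVec S) - t ⬝ᵥ (C.mulVec t) := by
    have := h6 t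
    rw [hkey, dotProduct_sub] at this
    rw [euclNorm_sq]
    exact this
  have hb1 : t ⬝ᵥ ((Bᵀ * A⁻¹).mulVec S) ≤ T * (Λmax * s) := by
    calc t ⬝ᵥ ((Bᵀ * A⁻¹).mulVec S) ≤ T * euclNorm ((Bᵀ * A⁻¹).mulVec S) := dot_le _ _
      _ ≤ T * (Λmax * s) := mul_le_mul_of_nonneg_left (h7 S) hTnn
  have hb2 : -(t ⬝ᵥ (C.mulVec t)) ≤ T * (Λmin * T / 2) := by
    have hC : euclNorm (C.mulVec t) ≤ Λmin * T / 2 := by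
      have := h9 t; linarith
    calc -(t ⬝ᵥ (C.mulVec t)) = t ⬝ᵥ (-(C.mulVec t)) := (dotProduct_neg _ _).symm
      _ ≤ T * euclNorm (-(C.mulVec t)) := dot_le _ _
      _ = T * euclNorm (C.mulVec t) := by rw [euclNorm_neg]
      _ ≤ T * (Λmin * T / 2) := mul_le_mul_of_nonneg_left hC hTnn
  have hTb : T ≤ 2 * Λmax / Λmin * s := by
    rcases eq_or_lt_of_le hTnn with h0 | h0
    · rw [← h0]; positivity
    · have : Λmin * (T * T) ≤ T * (Λmax * s) + T * (Λmin * T / 2) := by linarith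
      rw [div_mul_eq_mul_div, le_div_iff₀ hΛmin]
      nlinarith
  refine ⟨hTb, ?_⟩
  -- bound on D
  have hd1 : Λ'min * (D * D) ≤ δ ⬝ᵥ S + δ ⬝ᵥ (B.mulVec t) := by
    have := h5 δ
    rw [Matrix.neg_mulVec, hAd] at this
    rw [euclNorm_sq]
    calc Λ'min * (δ ⬝ᵥ δ) ≤ δ ⬝ᵥ -(-S - B.mulVec t) := this
      _ = δ ⬝ᵥ (S + B.mulVec t) := by rw [neg_sub, sub_neg_eq_add, add_comm]
      _ = δ ⬝ᵥ S + δ ⬝ᵥ (B.mulVec t) := dotProduct_add _ _ _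
  have hd2 : δ ⬝ᵥ (B.mulVec t) ≤ Λmin * T / 2 * T := by
    have heq : δ ⬝ᵥ (B.mulVec t) = (Bᵀ.mulVec δ) ⬝ᵥ t := by
      rw [Matrix.dotProduct_mulVec, Matrix.mulVec_transpose]
    rw [heq, hBd]
    have hC : euclNorm (C.mulVec t) ≤ Λmin * T / 2 := by
      have := h9 t; linarith
    calc (-(C.mulVec t)) ⬝ᵥ t ≤ euclNorm (-(C.mulVec t)) * T := dot_le _ _
      _ = euclNorm (C.mulVec t) * T := by rw [euclNorm_neg]
      _ ≤ Λmin * T / 2 * T := mul_le_mul_of_nonneg_right hC hTnn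
  have hd3 : δ ⬝ᵥ S ≤ D * s := dot_le _ _
  have hquad : Λ'min * D ^ 2 ≤ D * s + (2 * Λmax ^ 2 / Λmin) * s ^ 2 := by
    have hT2 : Λmin * T / 2 * T ≤ (2 * Λmax ^ 2 / Λmin) * s ^ 2 := by
      have hTs : T * T ≤ (2 * Λmax / Λmin * s) * (2 * Λmax / Λmin * s) :=
        mul_le_mul hTb hTb hTnn (by positivity)
      have : Λmin * T / 2 * T = Λmin / 2 * (T * T) := by ring
      rw [this]
      calc Λmin / 2 * (T * T) ≤ Λmin / 2 * ((2 * Λmax / Λmin * s) * (2 * Λmax / Λmin * s)) :=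
            mul_le_mul_of_nonneg_left hTs (by positivity)
        _ = (2 * Λmax ^ 2 / Λmin) * s ^ 2 := by field_simp
    have : D ^ 2 = D * D := sq D
    rw [this]
    linarith
  exact quad hΛ'min (by positivity) hDnn hsnn hquad

end DLEaux

namespace DLEaux

lemma conv_aux {Ω : Type*} [MeasurableSpace Ω] (μ : Measure Ω) [IsProbabilityMeasure μ]
    {k : ℕ} (R : ℕ → Ω → ℝ)
    (hR : TendstoInMeasure μ R atTop (fun _ => (0 : ℝ)))
    (hRnn : ∀ n ω, 0 ≤ R n ω)
    (V : ℕ → Ω → (Fin k → ℝ)) (Cc : ℝ) (hC : 0 < Cc)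
    (hb : ∀ n, ∀ᵐ ω ∂μ, euclNorm (V n ω) ≤ Cc * R n ω) {ε : ℝ} (hε : 0 < ε) :
    Tendsto (fun n => μ {ω | ε < euclNorm (V n ω)}) atTop (nhds 0) := by
  have h0 := hR (ENNReal.ofReal (ε / Cc)) (ENNReal.ofReal_pos.2 (by positivity))
  refine tendsto_of_tendsto_of_tendsto_of_le_of_le tendsto_const_nhds h0
    (fun n => by simp) (fun n => ?_)
  refine measure_mono_ae ?_
  filter_upwards [hb n] with ω hω hmem
  have hlt : ε / Cc < R n ω := by
    rw [div_lt_iff₀ hC]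
    calc ε < euclNorm (V n ω) := hmem
      _ ≤ Cc * R n ω := hω
      _ = R n ω * Cc := mul_comm _ _
  show ENNReal.ofReal (ε / Cc) ≤ edist (R n ω) 0
  rw [edist_dist]
  refine ENNReal.ofReal_le_ofReal ?_
  calc ε / Cc ≤ R n ω := hlt.le
    _ = dist (R n ω) 0 := by rw [Real.dist_eq, sub_zero, abs_of_nonneg (hRnn n ω)]

lemma euclNorm_continuous {k : ℕ} : Continuous (euclNorm (k := k)) := by
  unfold euclNorm dotProduct
  fun_prop

end DLEaux

/-- **Theorem 1 (Consistency of the Discriminative Likelihood Estimator).**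
Given i.i.d. data `X_i`, a measurable Stein feature map `g` with
`E[‖g(θ*, X_1)‖] < ∞` and `E[g(θ*, X_1)] = 0`, and estimators `(δ̂_n, θ̂_n)` solving,
almost surely, the mean-value expansion of the saddle-point first-order conditions with
Hessian blocks obeying the stated eigenvalue / operator-norm bounds, we have
`δ̂_n → 0` and `θ̂_n → θ*` in probability. -/
theorem dle_consistency
    {Ω : Type*} [MeasurableSpace Ω] (μ : Measure Ω) [IsProbabilityMeasure μ]
    {d m b : ℕ}
    (X : ℕ → Ω → (Fin d → ℝ)) (hX_meas : ∀ i, Measurable (X i))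
    (hX_indep : iIndepFun X μ)
    (hX_ident : ∀ i, IdentDistrib (X i) (X 0) μ μ)
    (g : (Fin m → ℝ) → (Fin d → ℝ) → (Fin b → ℝ))
    (hg_meas : Measurable (Function.uncurry g))
    (θstar : Fin m → ℝ)
    (hg_int : Integrable (fun ω => g θstar (X 0 ω)) μ)
    (hg_mean : ∫ ω, g θstar (X 0 ω) ∂μ = 0)
    (Λmin Λ'min Λmax : ℝ) (hΛmin : 0 < Λmin) (hΛ'min : 0 < Λ'min) (hΛmax : 0 < Λmax)
    (δhat : ℕ → Ω → (Fin b → ℝ)) (θhat : ℕ → Ω → (Fin m → ℝ))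
    (hδ_meas : ∀ n, Measurable (δhat n)) (hθ_meas : ∀ n, Measurable (θhat n))
    (H11 : ℕ → Ω → Matrix (Fin b) (Fin b) ℝ) (H12 : ℕ → Ω → Matrix (Fin b) (Fin m) ℝ)
    (H22 : ℕ → Ω → Matrix (Fin m) (Fin m) ℝ)
    (has : ∀ n : ℕ, ∀ᵐ ω ∂μ,
      -- (i) the mean-value expansion of the first-order conditions:
      ((n : ℝ)⁻¹ • ∑ i ∈ Finset.range n, g θstar (X i ω))
          + (H11 n ω).mulVec (δhat n ω) + (H12 n ω).mulVec (θhat n ω - θstar) = 0 ∧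
      (H12 n ω)ᵀ.mulVec (δhat n ω) + (H22 n ω).mulVec (θhat n ω - θstar) = 0 ∧
      -- (ii) the regularity conditions on the Hessian blocks:
      (H11 n ω).IsSymm ∧ (H22 n ω).IsSymm ∧
      (∀ x : Fin b → ℝ, Λ'min * (x ⬝ᵥ x) ≤ x ⬝ᵥ (-(H11 n ω)).mulVec x) ∧
      (∀ x : Fin m → ℝ,
        Λmin * (x ⬝ᵥ x) ≤ x ⬝ᵥ (-((H12 n ω)ᵀ * (H11 n ω)⁻¹ * (H12 n ω))).mulVec x) ∧
      (∀ x : Fin b → ℝ, euclNorm (((H12 n ω)ᵀ * (H11 n ω)⁻¹).mulVec x) ≤ Λmax * euclNorm x) ∧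
      (∀ x : Fin m → ℝ, euclNorm (((H11 n ω)⁻¹ * (H12 n ω)).mulVec x) ≤ Λmax * euclNorm x) ∧
      (∀ x : Fin m → ℝ, 2 * euclNorm ((H22 n ω).mulVec x) ≤ Λmin * euclNorm x)) :
    (∀ ε > (0 : ℝ),
      Tendsto (fun n => μ {ω | ε < euclNorm (δhat n ω)}) atTop (nhds 0)) ∧
    (∀ ε > (0 : ℝ),
      Tendsto (fun n => μ {ω | ε < euclNorm (θhat n ω - θstar)}) atTop (nhds 0)) := by
  classical
  set Y : ℕ → Ω → (Fin b → ℝ) := fun i ω => g θstar (X i ω) with hY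
  have hgθ : Measurable (g θstar) := by
    have h : (g θstar) = Function.uncurry g ∘ (fun x => (θstar, x)) := rfl
    rw [h]
    exact hg_meas.comp (measurable_const.prodMk measurable_id)
  have hYmeas : ∀ i, Measurable (Y i) := fun i => hgθ.comp (hX_meas i)
  have hindep : Pairwise (Function.onFun (IndepFun · · μ) Y) := fun i j hij =>
    (hX_indep.indepFun hij).comp hgθ hgθ
  have hident : ∀ i, IdentDistrib (Y i) (Y 0) μ μ := fun i =>
    (hX_ident i).comp hgθ
  have hint : Integrable (Y 0) μ := hg_int
  have hslln := ProbabilityTheory.strong_law_ae Y hint hindep hident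
  have hmean : (μ[Y 0]) = 0 := hg_mean
  rw [hmean] at hslln
  set S : ℕ → Ω → (Fin b → ℝ) :=
    fun n ω => (n : ℝ)⁻¹ • ∑ i ∈ Finset.range n, Y i ω with hS
  set R : ℕ → Ω → ℝ := fun n ω => euclNorm (S n ω) with hR
  have hS_meas : ∀ n, Measurable (S n) := by
    intro n
    have h1 : Measurable fun ω => ∑ i ∈ Finset.range n, Y i ω :=
      Finset.measurable_sum _ (fun i _ => hYmeas i)
    exact (measurable_const_smul ((n : ℝ)⁻¹)).comp h1
  have hR_meas : ∀ n, AEStronglyMeasurable (R n) μ := fun n =>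
    ((DLEaux.euclNorm_continuous.measurable).comp (hS_meas n)).aestronglyMeasurable
  have hR_ae : ∀ᵐ ω ∂μ, Tendsto (fun n => R n ω) atTop (nhds ((fun _ => (0:ℝ)) ω)) := by
    filter_upwards [hslln] with ω hω
    have h := (DLEaux.euclNorm_continuous.tendsto 0).comp hω
    simpa [hR, Function.comp_def, DLEaux.euclNorm_zero] using h
  have hTIM : TendstoInMeasure μ R atTop (fun _ => (0 : ℝ)) :=
    tendstoInMeasure_of_tendsto_ae hR_meas hR_ae
  have hRnn : ∀ n ω, 0 ≤ R n ω := fun n ω => DLEaux.euclNorm_nonneg _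
  set Ct : ℝ := 2 * Λmax / Λmin with hCt
  set Cδ : ℝ := 1 / Λ'min + Real.sqrt ((2 * Λmax ^ 2 / Λmin) / Λ'min) with hCδ
  have hCt_pos : 0 < Ct := by positivity
  have hCδ_pos : 0 < Cδ := by positivity
  have hkeys : ∀ n, ∀ᵐ ω ∂μ,
      euclNorm (θhat n ω - θstar) ≤ Ct * R n ω ∧ euclNorm (δhat n ω) ≤ Cδ * R n ω := by
    intro n
    filter_upwards [has n] with ω hω
    obtain ⟨f1, f2, _, _, h5, h6, h7, _, h9⟩ := hω
    have hk := DLEaux.key hΛmin hΛ'min hΛmax (S n ω) (δhat n ω) (θhat n ω - θstar)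
      (H11 n ω) (H12 n ω) (H22 n ω) f1 f2 h5 h6 h7 h9
    exact ⟨hk.1, hk.2⟩
  constructor
  · intro ε hε
    exact DLEaux.conv_aux μ R hTIM hRnn δhat Cδ hCδ_pos
      (fun n => (hkeys n).mono fun ω h => h.2) hε
  · intro ε hε
    exact DLEaux.conv_aux μ R hTIM hRnn (fun n ω => θhat n ω - θstar) Ct hCt_pos
      (fun n => (hkeys n).mono fun ω h => h.1) hε
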